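/- Let n ≥ 1, c > 0, C₀ > 0 and 0 < α < 1. Let u be a strong solution of ∂_t u − Δu = χ_{u>0} on Q_1 such that u(y,t₂) − u(y,t₁) ≥ c(t₂ − t₁) whenever (y,t₁), (y,t₂) ∈ Q_1 with t₁ ≤ t₂, and such that |∇u(y,s) − ∇u(z,τ)| ≤ C₀(|y − z|^α + |s − τ|^{α/2}) for all (y,s), (z,τ) ∈ Q_1. Let (x,t) ∈ Γ ∩ Q_{1/2} with ∇u(x,t) = 0. Then every free boundary point (y,s) ∈ Γ ∩ Q_{1/2} satisfies |s − t| ≤ (C₀/(c(α+1))) |y − x|^{1+α}. In particular, the graph function of Γ over the spatial variable is differentiable at x with vanishing gradient there. -/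

import Mathlib

open MeasureTheory Metric Set Filter

noncomputable section

abbrev Spc (n : ℕ) := EuclideanSpace ℝ (Fin n)

/-- Parabolic cylinder `Q_r(x,t)`. -/
def Qcyl (n : ℕ) (r : ℝ) (x : Spc n) (t : ℝ) : Set (Spc n × ℝ) :=
  {p : Spc n × ℝ | ‖p.1 - x‖ + Real.sqrt |p.2 - t| < r}

/-- Time derivative `∂ₜ u`. -/
def timeDeriv {n : ℕ} (u : Spc n × ℝ → ℝ) (p : Spc n × ℝ) : ℝ :=
  deriv (fun s => u (p.1, s)) p.2

/-- Spatial gradient `∇u`. -/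
def spGrad {n : ℕ} (u : Spc n × ℝ → ℝ) (p : Spc n × ℝ) : Spc n :=
  gradient (fun y => u (y, p.2)) p.1

/-- The point `p` translated by `h` in the `i`-th spatial direction. -/
def dirPoint {n : ℕ} (p : Spc n × ℝ) (i : Fin n) (h : ℝ) : Spc n × ℝ :=
  (p.1 + h • EuclideanSpace.single i (1 : ℝ), p.2)

/-- Second spatial partial `∂ᵢⱼ u`, as derivative of the `i`-th component of
the spatial gradient in direction `j`. -/
def secondPartial {n : ℕ} (u : Spc n × ℝ → ℝ) (i j : Fin n) (p : Spc n × ℝ) : ℝ :=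
  deriv (fun h : ℝ => spGrad u (dirPoint p j h) i) 0

/-- Spatial Laplacian `Δu`. -/
def lapl {n : ℕ} (u : Spc n × ℝ → ℝ) (p : Spc n × ℝ) : ℝ :=
  ∑ i, secondPartial u i i p

/-- `u` is a strong solution of `∂ₜ u - Δu = g · χ_{u>0}` on `U`:
continuous with continuous spatial gradient, and a.e. on `U` the time derivative and
the pure second spatial partials exist and the equation holds. -/
def IsStrongSolution {n : ℕ} (u : Spc n × ℝ → ℝ) (g : ℝ) (U : Set (Spc n × ℝ)) : Prop :=
  ContinuousOn u U ∧
  (∀ p ∈ U, HasGradientAt (fun y => u (y, p.2)) (spGrad u p) p.1) ∧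
  ContinuousOn (fun p => spGrad u p) U ∧
  (∀ᵐ p ∂(volume.restrict U),
    HasDerivAt (fun s => u (p.1, s)) (timeDeriv u p) p.2 ∧
    (∀ i : Fin n, HasDerivAt (fun h : ℝ => spGrad u (dirPoint p i h) i) (secondPartial u i i p) 0) ∧
    timeDeriv u p - lapl u p = (if 0 < u p then g else 0))

/-- The free boundary `Γ = ∂{u>0}` relative to the open set `U`. -/
def freeBdry {n : ℕ} (u : Spc n × ℝ → ℝ) (U : Set (Spc n × ℝ)) : Set (Spc n × ℝ) :=
  U ∩ frontier {p : Spc n × ℝ | 0 < u p}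


lemma qcyl_open (n : ℕ) (r : ℝ) (x : Spc n) (t : ℝ) : IsOpen (Qcyl n r x t) := by
  have h : Continuous fun p : Spc n × ℝ => ‖p.1 - x‖ + Real.sqrt |p.2 - t| := by fun_prop
  exact isOpen_lt h continuous_const

lemma mem_Qcyl_iff {n : ℕ} {r : ℝ} {y : Spc n} {s : ℝ} :
    (y, s) ∈ Qcyl n r 0 0 ↔ ‖y‖ + Real.sqrt |s| < r := by
  simp [Qcyl]

lemma freeBdry_zero {n : ℕ} {u : Spc n × ℝ → ℝ} {U : Set (Spc n × ℝ)}
    (hU : IsOpen U) (hc : ContinuousOn u U) {p : Spc n × ℝ}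
    (hp : p ∈ freeBdry u U) : u p = 0 := by
  have hca : ContinuousAt u p := hc.continuousAt (hU.mem_nhds hp.1)
  rcases lt_trichotomy (u p) 0 with h | h | h
  · exfalso
    have hnb : u ⁻¹' Iio 0 ∈ nhds p := hca (Iio_mem_nhds h)
    have hcl : p ∈ closure {q | 0 < u q} := hp.2.1
    rcases mem_closure_iff_nhds.mp hcl _ hnb with ⟨q, hq1, hq2⟩
    simp only [mem_preimage, mem_Iio, mem_setOf_eq] at hq1 hq2
    linarith
  · exact h
  · exfalso
    have hnb : u ⁻¹' Ioi 0 ∈ nhds p := hca (Ioi_mem_nhds h)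
    exact hp.2.2 (mem_interior_iff_mem_nhds.mpr hnb)

lemma key_bound {n : ℕ} {C₀ α : ℝ} (hC₀ : 0 < C₀) (hα : 0 < α)
    (u : Spc n × ℝ → ℝ)
    (hgradat : ∀ p ∈ Qcyl n 1 0 0, HasGradientAt (fun y => u (y, p.2)) (spGrad u p) p.1)
    (hgradcont : ContinuousOn (fun p => spGrad u p) (Qcyl n 1 0 0))
    (hgrad : ∀ p q : Spc n × ℝ, p ∈ Qcyl n 1 0 0 → q ∈ Qcyl n 1 0 0 →
      ‖spGrad u p - spGrad u q‖ ≤ C₀ * (‖p.1 - q.1‖ ^ α + |p.2 - q.2| ^ (α / 2)))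
    (x y : Spc n) (t : ℝ)
    (hseg : ∀ τ ∈ Set.Icc (0:ℝ) 1, (x + τ • (y - x), t) ∈ Qcyl n 1 0 0)
    (hgrad0 : spGrad u (x, t) = 0) :
    |u (y, t) - u (x, t)| ≤ C₀ * ‖y - x‖ ^ (1 + α) / (α + 1) := by
  set v : Spc n := y - x with hv
  set γ : ℝ → Spc n := fun τ => x + τ • v with hγ
  set φ : ℝ → ℝ := fun τ => u (γ τ, t) with hφ
  set ψ : ℝ → ℝ := fun τ => inner ℝ (spGrad u (γ τ, t)) v with hψ
  have hIcc : Set.uIcc (0:ℝ) 1 = Set.Icc 0 1 := Set.uIcc_of_le zero_le_one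
  have hderiv : ∀ τ ∈ Set.uIcc (0:ℝ) 1, HasDerivAt φ (ψ τ) τ := by
    intro τ hτ
    rw [hIcc] at hτ
    have hmem := hseg τ hτ
    have hg := (hgradat _ hmem).hasFDerivAt
    have hγd : HasDerivAt γ v τ := by
      have h := ((hasDerivAt_id τ).smul_const v).const_add x
      simp only [one_smul] at h
      exact h
    have := hg.comp_hasDerivAt τ hγd
    simp only [InnerProductSpace.toDual_apply_apply] at this
    exact this
  have hγcont : Continuous fun τ : ℝ => ((γ τ, t) : Spc n × ℝ) := by fun_prop
  have hψcont : ContinuousOn ψ (Set.Icc 0 1) := by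
    apply ContinuousOn.inner
    · exact hgradcont.comp hγcont.continuousOn (fun τ hτ => hseg τ hτ)
    · exact continuousOn_const
  have hψint : IntervalIntegrable ψ volume 0 1 := by
    apply ContinuousOn.intervalIntegrable
    rwa [hIcc]
  have hFTC : ∫ τ in (0:ℝ)..1, ψ τ = φ 1 - φ 0 :=
    intervalIntegral.integral_eq_sub_of_hasDerivAt hderiv hψint
  have hpt : ∀ τ ∈ Set.Icc (0:ℝ) 1, |ψ τ| ≤ C₀ * ‖v‖ ^ (1 + α) * τ ^ α := by
    intro τ hτ
    have h1 : |ψ τ| ≤ ‖spGrad u (γ τ, t)‖ * ‖v‖ := abs_real_inner_le_norm _ _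
    have h2 : ‖spGrad u (γ τ, t)‖ ≤ C₀ * (τ ^ α * ‖v‖ ^ α) := by
      have hx0 : (x, t) ∈ Qcyl n 1 0 0 := by simpa using hseg 0 (by norm_num)
      have := hgrad (γ τ, t) (x, t) (hseg τ hτ) hx0
      simp only [hgrad0, sub_zero] at this
      have hnorm : ‖γ τ - x‖ = τ * ‖v‖ := by
        simp [γ, norm_smul, abs_of_nonneg hτ.1]
      rw [hnorm, sub_self, abs_zero, Real.zero_rpow (by positivity), add_zero] at this
      rwa [Real.mul_rpow hτ.1 (norm_nonneg v)] at this
    calc |ψ τ| ≤ ‖spGrad u (γ τ, t)‖ * ‖v‖ := h1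
      _ ≤ C₀ * (τ ^ α * ‖v‖ ^ α) * ‖v‖ := by
          apply mul_le_mul_of_nonneg_right h2 (norm_nonneg v)
      _ = C₀ * ‖v‖ ^ (1 + α) * τ ^ α := by
          rw [Real.rpow_add' (norm_nonneg v) (by positivity), Real.rpow_one]; ring
  have habs : |∫ τ in (0:ℝ)..1, ψ τ| ≤ ∫ τ in (0:ℝ)..1, |ψ τ| :=
    intervalIntegral.abs_integral_le_integral_abs zero_le_one
  have hgint : IntervalIntegrable (fun τ : ℝ => C₀ * ‖v‖ ^ (1 + α) * τ ^ α) volume 0 1 :=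
    (intervalIntegral.intervalIntegrable_rpow' (by linarith)).const_mul _
  have hmono2 : ∫ τ in (0:ℝ)..1, |ψ τ| ≤ ∫ τ in (0:ℝ)..1, C₀ * ‖v‖ ^ (1 + α) * τ ^ α := by
    apply intervalIntegral.integral_mono_on zero_le_one hψint.abs hgint
    exact hpt
  have hval : ∫ τ in (0:ℝ)..1, C₀ * ‖v‖ ^ (1 + α) * τ ^ α
      = C₀ * ‖v‖ ^ (1 + α) / (α + 1) := by
    rw [intervalIntegral.integral_const_mul, integral_rpow (Or.inl (by linarith))]
    rw [Real.one_rpow, Real.zero_rpow (by positivity)]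
    ring
  have hφ1 : φ 1 = u (y, t) := by simp [φ, γ, v]
  have hφ0 : φ 0 = u (x, t) := by simp [φ, γ]
  calc |u (y, t) - u (x, t)| = |∫ τ in (0:ℝ)..1, ψ τ| := by rw [hFTC, hφ1, hφ0]
    _ ≤ ∫ τ in (0:ℝ)..1, |ψ τ| := habs
    _ ≤ C₀ * ‖v‖ ^ (1 + α) / (α + 1) := by rw [← hval]; exact hmono2

/-- at a free boundary point where the spatial gradient vanishes, nearby free
boundary points satisfy `|s - t| ≤ (C₀/(c(α+1)))|y - x|^{1+α}`; in particular the graph of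
the free boundary over the spatial variable is differentiable at `x` with vanishing
gradient. -/
theorem stmt11 (n : ℕ) (hn : 1 ≤ n) (c C₀ α : ℝ) (hc : 0 < c) (hC₀ : 0 < C₀)
    (hα : 0 < α) (hα1 : α < 1) (u : Spc n × ℝ → ℝ)
    (hsol : IsStrongSolution u 1 (Qcyl n 1 0 0))
    (hmono : ∀ (y : Spc n) (t₁ t₂ : ℝ), (y, t₁) ∈ Qcyl n 1 0 0 → (y, t₂) ∈ Qcyl n 1 0 0 →
      t₁ ≤ t₂ → c * (t₂ - t₁) ≤ u (y, t₂) - u (y, t₁))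
    (hgrad : ∀ p q : Spc n × ℝ, p ∈ Qcyl n 1 0 0 → q ∈ Qcyl n 1 0 0 →
      ‖spGrad u p - spGrad u q‖ ≤ C₀ * (‖p.1 - q.1‖ ^ α + |p.2 - q.2| ^ (α / 2)))
    (x : Spc n) (t : ℝ)
    (hxt : (x, t) ∈ freeBdry u (Qcyl n 1 0 0) ∩ Qcyl n (1/2) 0 0)
    (hgrad0 : spGrad u (x, t) = 0) :
    (∀ (y : Spc n) (s : ℝ), (y, s) ∈ freeBdry u (Qcyl n 1 0 0) ∩ Qcyl n (1/2) 0 0 →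
      |s - t| ≤ (C₀ / (c * (α + 1))) * ‖y - x‖ ^ (1 + α)) ∧
    ∀ H : Spc n → ℝ,
      (∀ p ∈ freeBdry u (Qcyl n 1 0 0) ∩ Qcyl n (1/2) 0 0, H p.1 = p.2) →
      HasFDerivWithinAt H (0 : Spc n →L[ℝ] ℝ)
        (Prod.fst '' (freeBdry u (Qcyl n 1 0 0) ∩ Qcyl n (1/2) 0 0)) x := by
  obtain ⟨hcontu, hgradat, hgradcont, -⟩ := hsol
  have hUopen : IsOpen (Qcyl n 1 0 0) := qcyl_open n 1 0 0
  obtain ⟨hfbx, hxQ⟩ := hxt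
  have hux : u (x, t) = 0 := freeBdry_zero hUopen hcontu hfbx
  have hxQ' : ‖x‖ + Real.sqrt |t| < 1/2 := mem_Qcyl_iff.mp hxQ
  have hxn : ‖x‖ < 1/2 := lt_of_le_of_lt (le_add_of_nonneg_right (Real.sqrt_nonneg _)) hxQ'
  have hts : Real.sqrt |t| < 1/2 := lt_of_le_of_lt (le_add_of_nonneg_left (norm_nonneg _)) hxQ'
  have key : ∀ (y : Spc n) (s : ℝ), (y, s) ∈ freeBdry u (Qcyl n 1 0 0) ∩ Qcyl n (1/2) 0 0 →
      |s - t| ≤ (C₀ / (c * (α + 1))) * ‖y - x‖ ^ (1 + α) := by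
    intro y s hys
    obtain ⟨hfby, hyQ⟩ := hys
    have huy : u (y, s) = 0 := freeBdry_zero hUopen hcontu hfby
    have hyQ' : ‖y‖ + Real.sqrt |s| < 1/2 := mem_Qcyl_iff.mp hyQ
    have hyn : ‖y‖ < 1/2 :=
      lt_of_le_of_lt (le_add_of_nonneg_right (Real.sqrt_nonneg _)) hyQ'
    have hseg : ∀ τ ∈ Set.Icc (0:ℝ) 1, (x + τ • (y - x), t) ∈ Qcyl n 1 0 0 := by
      intro τ hτ
      rw [mem_Qcyl_iff]
      have heq : x + τ • (y - x) = (1-τ) • x + τ • y := by module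
      have h1 : ‖x + τ • (y - x)‖ ≤ (1-τ) * ‖x‖ + τ * ‖y‖ := by
        rw [heq]
        calc ‖(1-τ) • x + τ • y‖ ≤ ‖(1-τ) • x‖ + ‖τ • y‖ := norm_add_le _ _
          _ = (1-τ) * ‖x‖ + τ * ‖y‖ := by
              rw [norm_smul, norm_smul, Real.norm_eq_abs, Real.norm_eq_abs,
                abs_of_nonneg (by linarith [hτ.2]), abs_of_nonneg hτ.1]
      have h2 : (1-τ) * ‖x‖ + τ * ‖y‖ < 1/2 := by
        rcases le_total ‖x‖ ‖y‖ with hxy | hxy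
        · have h5 : (1-τ) * ‖x‖ + τ * ‖y‖ ≤ ‖y‖ := by
            nlinarith [mul_nonneg (by linarith [hτ.2] : (0:ℝ) ≤ 1-τ)
              (by linarith : (0:ℝ) ≤ ‖y‖ - ‖x‖)]
          linarith
        · have h5 : (1-τ) * ‖x‖ + τ * ‖y‖ ≤ ‖x‖ := by
            nlinarith [mul_nonneg hτ.1 (by linarith : (0:ℝ) ≤ ‖x‖ - ‖y‖)]
          linarith
      linarith
    have hB := key_bound hC₀ hα u hgradat hgradcont hgrad x y t hseg hgrad0
    rw [hux, sub_zero] at hB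
    have hyt : (y, t) ∈ Qcyl n 1 0 0 := by rw [mem_Qcyl_iff]; linarith
    have hys1 : (y, s) ∈ Qcyl n 1 0 0 := hfby.1
    have hM : c * |s - t| ≤ C₀ * ‖y - x‖ ^ (1+α) / (α+1) := by
      rcases le_total t s with h | h
      · have h2 := hmono y t s hyt hys1 h
        rw [huy] at h2
        rw [abs_of_nonneg (by linarith)]
        calc c * (s - t) ≤ -u (y, t) := by linarith
          _ ≤ |u (y, t)| := neg_le_abs _
          _ ≤ _ := hB
      · have h2 := hmono y s t hys1 hyt h
        rw [huy] at h2
        rw [abs_of_nonpos (by linarith), neg_sub]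
        calc c * (t - s) ≤ u (y, t) := by linarith
          _ ≤ |u (y, t)| := le_abs_self _
          _ ≤ _ := hB
    have h3 : c * |s - t| * (α+1) ≤ C₀ * ‖y - x‖ ^ (1+α) := by
      have h4 := mul_le_mul_of_nonneg_right hM (by linarith : (0:ℝ) ≤ α+1)
      rwa [div_mul_cancel₀] at h4
      positivity
    rw [div_mul_eq_mul_div, le_div_iff₀ (by positivity : (0:ℝ) < c*(α+1))]
    nlinarith [h3]
  refine ⟨key, ?_⟩
  intro H hH
  have hHx : H x = t := hH (x, t) ⟨hfbx, hxQ⟩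
  set K := C₀ / (c * (α + 1)) with hK
  have goal_iff := hasFDerivWithinAt_iff_isLittleO
    (f := H) (f' := (0 : Spc n →L[ℝ] ℝ)) (x := x)
    (s := (Prod.fst '' (freeBdry u (Qcyl n 1 0 0) ∩ Qcyl n (1/2) 0 0)))
  rw [goal_iff]
  simp only [ContinuousLinearMap.zero_apply, sub_zero]
  rw [Asymptotics.isLittleO_iff]
  intro ε hε
  have htend : Tendsto (fun z : Spc n => K * ‖z - x‖ ^ α) (nhds x) (nhds 0) := by
    have h1 : Tendsto (fun z : Spc n => ‖z - x‖) (nhds x) (nhds 0) := by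
      have hcz : ContinuousAt (fun z : Spc n => ‖z - x‖) x := by fun_prop
      simpa using hcz.tendsto
    have h2 : Tendsto (fun r : ℝ => K * r ^ α) (nhds 0) (nhds 0) := by
      have h3 : ContinuousAt (fun r : ℝ => r ^ α) 0 :=
        Real.continuousAt_rpow_const 0 α (Or.inr hα.le)
      have h4 := h3.tendsto
      rw [Real.zero_rpow hα.ne'] at h4
      simpa using h4.const_mul K
    exact h2.comp h1
  have hev : ∀ᶠ z in
      nhdsWithin x (Prod.fst '' (freeBdry u (Qcyl n 1 0 0) ∩ Qcyl n (1/2) 0 0)),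
      K * ‖z - x‖ ^ α ≤ ε := by
    apply eventually_nhdsWithin_of_eventually_nhds
    filter_upwards [htend (Iio_mem_nhds hε)] with z hz
    exact le_of_lt hz
  filter_upwards [hev, self_mem_nhdsWithin] with z hz hzS
  obtain ⟨p, hp, rfl⟩ := hzS
  have hkey := key p.1 p.2 (by simpa using hp)
  have hHz : H p.1 = p.2 := hH p hp
  rw [Real.norm_eq_abs, hHz, hHx]
  calc |p.2 - t| ≤ K * ‖p.1 - x‖ ^ (1+α) := hkey
    _ = K * ‖p.1 - x‖ ^ α * ‖p.1 - x‖ := by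
        rw [Real.rpow_add' (norm_nonneg _) (by positivity), Real.rpow_one]; ring
    _ ≤ ε * ‖p.1 - x‖ := mul_le_mul_of_nonneg_right hz (norm_nonneg _)


end
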